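/- The Legendre–Fenchel conjugate of the Monge–Kantorovich cost is the characteristic function of the dual feasibility polytope: for every (u,v) ∈ ℝ^{Ma}×ℝ^{Mb}, the supremum over (a,b) ∈ S of ⟨a,u⟩ + ⟨b,v⟩ − MK(a,b) equals 0 if u_i + v_j ≤ C_{ij} for all i,j, and equals +∞ otherwise. -/

import Mathlib

open scoped BigOperators

/-- The transport polytope `P(a,b)`: nonnegative matrices with row sums `a`
and column sums `b`. -/
def transportPolytope {Ma Mb : ℕ} (a : Fin Ma → ℝ) (b : Fin Mb → ℝ) :
    Set (Matrix (Fin Ma) (Fin Mb) ℝ) :=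
  {P | (∀ i j, 0 ≤ P i j) ∧ (∀ i, ∑ j, P i j = a i) ∧ (∀ j, ∑ i, P i j = b j)}

/-- The transport cost `⟨P, C⟩ = ∑_{i,j} P_{ij} C_{ij}`. -/
def transportCost {Ma Mb : ℕ} (C P : Matrix (Fin Ma) (Fin Mb) ℝ) : ℝ :=
  ∑ i, ∑ j, P i j * C i j

/-- The Monge–Kantorovich cost `MK(a,b) = inf_{P ∈ P(a,b)} ⟨P,C⟩`. -/
noncomputable def MK {Ma Mb : ℕ} (C : Matrix (Fin Ma) (Fin Mb) ℝ)
    (a : Fin Ma → ℝ) (b : Fin Mb → ℝ) : ℝ :=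
  sInf (transportCost C '' transportPolytope a b)

section Aux

variable {Ma Mb : ℕ}

lemma aux_pairing {a : Fin Ma → ℝ} {b : Fin Mb → ℝ} {P : Matrix (Fin Ma) (Fin Mb) ℝ}
    (hrow : ∀ i, ∑ j, P i j = a i) (hcol : ∀ j, ∑ i, P i j = b j)
    (u : Fin Ma → ℝ) (v : Fin Mb → ℝ) :
    ∑ i, ∑ j, P i j * (u i + v j) = ∑ i, a i * u i + ∑ j, b j * v j := by
  have h1 : ∑ i, ∑ j, P i j * u i = ∑ i, a i * u i :=
    Finset.sum_congr rfl fun i _ => by rw [← Finset.sum_mul, hrow i]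
  have h2 : ∑ i, ∑ j, P i j * v j = ∑ j, b j * v j := by
    rw [Finset.sum_comm]
    exact Finset.sum_congr rfl fun j _ => by rw [← Finset.sum_mul, hcol j]
  simp_rw [mul_add, Finset.sum_add_distrib, h1, h2]

/-- The product coupling is in the transport polytope. -/
lemma aux_product_mem (hMa : 0 < Ma) {a : Fin Ma → ℝ} {b : Fin Mb → ℝ}
    (ha : ∀ i, 0 < a i) (hb : ∀ j, 0 < b j) (hs : ∑ i, a i = ∑ j, b j) :
    (fun i j => a i * b j / (∑ i, a i)) ∈ transportPolytope a b := by
  haveI : Nonempty (Fin Ma) := ⟨⟨0, hMa⟩⟩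
  have hS : 0 < ∑ i, a i :=
    Finset.sum_pos (fun i _ => ha i) Finset.univ_nonempty
  refine ⟨fun i j => le_of_lt (div_pos (mul_pos (ha i) (hb j)) hS), fun i => ?_, fun j => ?_⟩
  · simp_rw [div_eq_mul_inv, ← Finset.sum_mul, ← Finset.mul_sum, ← hs]
    field_simp
  · simp_rw [div_eq_mul_inv, ← Finset.sum_mul (f := fun i => a i * b j)]
    rw [show ∑ i, a i * b j = (∑ i, a i) * b j from (Finset.sum_mul ..).symm]
    field_simp

lemma aux_bddBelow (hMa : 0 < Ma) (hMb : 0 < Mb) (C : Matrix (Fin Ma) (Fin Mb) ℝ)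
    (a : Fin Ma → ℝ) (b : Fin Mb → ℝ) :
    BddBelow (transportCost C '' transportPolytope a b) := by
  haveI : Nonempty (Fin Ma) := ⟨⟨0, hMa⟩⟩
  haveI : Nonempty (Fin Mb) := ⟨⟨0, hMb⟩⟩
  classical
  set m := Finset.univ.inf' Finset.univ_nonempty
      (fun i : Fin Ma => Finset.univ.inf' Finset.univ_nonempty (fun j => C i j)) with hm
  have hmle : ∀ i j, m ≤ C i j := fun i j =>
    le_trans (Finset.inf'_le _ (Finset.mem_univ i)) (Finset.inf'_le _ (Finset.mem_univ j))
  refine ⟨(∑ i, a i) * m, ?_⟩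
  rintro x ⟨P, ⟨hpos, hrow, hcol⟩, rfl⟩
  have : (∑ i, a i) * m = ∑ i, ∑ j, P i j * m := by
    simp_rw [← Finset.sum_mul]
    congr 1
    exact Finset.sum_congr rfl fun i _ => (hrow i).symm
  rw [this]
  exact Finset.sum_le_sum fun i _ => Finset.sum_le_sum fun j _ =>
    mul_le_mul_of_nonneg_left (hmle i j) (hpos i j)

/-- Weak duality: with dual feasibility, `⟨a,u⟩ + ⟨b,v⟩ ≤ MK(a,b)`. -/
lemma aux_MK_ge (hMa : 0 < Ma) (C : Matrix (Fin Ma) (Fin Mb) ℝ)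
    {u : Fin Ma → ℝ} {v : Fin Mb → ℝ} (hd : ∀ i j, u i + v j ≤ C i j)
    {a : Fin Ma → ℝ} {b : Fin Mb → ℝ}
    (ha : ∀ i, 0 < a i) (hb : ∀ j, 0 < b j) (hs : ∑ i, a i = ∑ j, b j) :
    ∑ i, a i * u i + ∑ j, b j * v j ≤ MK C a b := by
  apply le_csInf
  · exact ⟨_, ⟨_, aux_product_mem hMa ha hb hs, rfl⟩⟩
  · rintro x ⟨P, ⟨hpos, hrow, hcol⟩, rfl⟩
    rw [← aux_pairing hrow hcol u v]
    exact Finset.sum_le_sum fun i _ => Finset.sum_le_sum fun j _ =>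
      mul_le_mul_of_nonneg_left (hd i j) (hpos i j)

lemma aux_MK_le (hMa : 0 < Ma) (hMb : 0 < Mb) (C : Matrix (Fin Ma) (Fin Mb) ℝ)
    {a : Fin Ma → ℝ} {b : Fin Mb → ℝ} {P : Matrix (Fin Ma) (Fin Mb) ℝ}
    (hP : P ∈ transportPolytope a b) :
    MK C a b ≤ transportCost C P :=
  csInf_le (aux_bddBelow hMa hMb C a b) ⟨P, hP, rfl⟩

end Aux

/-- The Legendre–Fenchel conjugate of the Monge–Kantorovich cost, taken over the
admissible set `S`, is the characteristic function of the dual feasibility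
polytope `{(u,v) : u_i + v_j ≤ C_{ij}}`: it equals `0` on that polytope and
`+∞` outside of it. -/
theorem MK_conjugate_eq_characteristic (Ma Mb : ℕ) (hMa : 0 < Ma) (hMb : 0 < Mb)
    (C : Matrix (Fin Ma) (Fin Mb) ℝ)
    (u : Fin Ma → ℝ) (v : Fin Mb → ℝ) :
    ((∀ i j, u i + v j ≤ C i j) →
      sSup {x : EReal | ∃ (a : Fin Ma → ℝ) (b : Fin Mb → ℝ),
          (∀ i, 0 < a i) ∧ (∀ j, 0 < b j) ∧ (∑ i, a i = ∑ j, b j) ∧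
          x = ((∑ i, a i * u i + ∑ j, b j * v j - MK C a b : ℝ) : EReal)} = 0) ∧
    (¬ (∀ i j, u i + v j ≤ C i j) →
      sSup {x : EReal | ∃ (a : Fin Ma → ℝ) (b : Fin Mb → ℝ),
          (∀ i, 0 < a i) ∧ (∀ j, 0 < b j) ∧ (∑ i, a i = ∑ j, b j) ∧
          x = ((∑ i, a i * u i + ∑ j, b j * v j - MK C a b : ℝ) : EReal)} = ⊤) := by
  classical
  constructor
  · -- dual feasible case
    intro hd
    apply le_antisymm
    · -- sSup ≤ 0
      apply sSup_le
      rintro x ⟨a, b, ha, hb, hs, rfl⟩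
      have h := aux_MK_ge hMa C hd ha hb hs
      have : (∑ i, a i * u i + ∑ j, b j * v j - MK C a b : ℝ) ≤ 0 := by linarith
      exact_mod_cast EReal.coe_le_coe_iff.mpr this
    · -- 0 ≤ sSup
      set c₀ : ℝ := (Mb : ℝ) * ∑ i, u i + (Ma : ℝ) * ∑ j, v j - ∑ i, ∑ j, C i j with hc₀
      -- family of elements indexed by t > 0
      have key : ∀ t : ℝ, 0 < t → ∃ x ∈ {x : EReal | ∃ (a : Fin Ma → ℝ) (b : Fin Mb → ℝ),
          (∀ i, 0 < a i) ∧ (∀ j, 0 < b j) ∧ (∑ i, a i = ∑ j, b j) ∧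
          x = ((∑ i, a i * u i + ∑ j, b j * v j - MK C a b : ℝ) : EReal)},
          ∃ r : ℝ, x = (r : EReal) ∧ t * c₀ ≤ r := by
        intro t ht
        set a : Fin Ma → ℝ := fun _ => t * Mb with hadef
        set b : Fin Mb → ℝ := fun _ => t * Ma with hbdef
        have ha : ∀ i, 0 < a i := fun i => by
          simp only [hadef]; positivity
        have hb : ∀ j, 0 < b j := fun j => by
          simp only [hbdef]; positivity
        have hs : ∑ i, a i = ∑ j, b j := by
          simp [hadef, hbdef]; ring
        have hPmem : (fun _ _ => t) ∈ transportPolytope a b := by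
          refine ⟨fun i j => le_of_lt ht, fun i => ?_, fun j => ?_⟩ <;>
            simp [hadef, hbdef, mul_comm]
        have hMKle : MK C a b ≤ t * ∑ i, ∑ j, C i j := by
          have := aux_MK_le hMa hMb C hPmem
          calc MK C a b ≤ transportCost C (fun _ _ => t) := this
            _ = t * ∑ i, ∑ j, C i j := by
              simp [transportCost, Finset.mul_sum]
        refine ⟨_, ⟨a, b, ha, hb, hs, rfl⟩, _, rfl, ?_⟩
        have hA : ∑ i, a i * u i = t * ((Mb : ℝ) * ∑ i, u i) := by
          simp [hadef, Finset.mul_sum]; ring_nf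
        have hB : ∑ j, b j * v j = t * ((Ma : ℝ) * ∑ j, v j) := by
          simp [hbdef, Finset.mul_sum]; ring_nf
        rw [hA, hB, hc₀]
        nlinarith [hMKle]
      refine le_of_forall_lt fun w hw => ?_
      obtain ⟨r, hwr, hr0⟩ := EReal.exists_between_coe_real hw
      have hr0' : r < 0 := by exact_mod_cast hr0
      set t : ℝ := (-r) / (|c₀| + 1) with htdef
      have ht : 0 < t := by
        apply div_pos (by linarith) (by positivity)
      obtain ⟨x, hxmem, s, rfl, hts⟩ := key t ht
      have htc : r ≤ t * c₀ := by
        have h1 : t * c₀ ≥ -(t * (|c₀| + 1)) := by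
          nlinarith [neg_abs_le c₀, ht.le]
        have h2 : t * (|c₀| + 1) = -r := by
          rw [htdef]; field_simp
        linarith
      have : r ≤ s := le_trans htc hts
      calc w < (r : EReal) := hwr
        _ ≤ (s : EReal) := by exact_mod_cast this
        _ ≤ _ := le_sSup hxmem
  · -- infeasible case
    intro hd
    push_neg at hd
    obtain ⟨i0, j0, hij⟩ := hd
    set δ : ℝ := u i0 + v j0 - C i0 j0 with hδ
    have hδpos : 0 < δ := by rw [hδ]; linarith
    rw [sSup_eq_top]
    intro w hw
    obtain ⟨r, hwr, -⟩ := EReal.exists_between_coe_real hw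
    -- choose t large
    set K : ℝ := ∑ i, u i + ((Ma : ℝ)/Mb) * ∑ j, v j - (∑ i, ∑ j, C i j) / Mb with hK
    set t : ℝ := max 1 ((r - K + 1) / δ) with htdef
    have ht : 0 < t := lt_of_lt_of_le one_pos (le_max_left _ _)
    have htd : r - K + 1 ≤ t * δ := by
      have := le_max_right 1 ((r - K + 1) / δ)
      calc r - K + 1 = ((r - K + 1) / δ) * δ := by field_simp
        _ ≤ t * δ := by
          apply mul_le_mul_of_nonneg_right _ hδpos.le
          exact le_max_right _ _
    set a : Fin Ma → ℝ := fun i => 1 + if i = i0 then t else 0 with hadef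
    set b : Fin Mb → ℝ := fun j => (Ma : ℝ)/Mb + if j = j0 then t else 0 with hbdef
    have hMbpos : (0:ℝ) < Mb := by exact_mod_cast hMb
    have hMapos : (0:ℝ) < Ma := by exact_mod_cast hMa
    have ha : ∀ i, 0 < a i := fun i => by
      simp only [hadef]; split <;> [linarith; norm_num]
    have hb : ∀ j, 0 < b j := fun j => by
      have : (0:ℝ) < (Ma:ℝ)/Mb := by positivity
      simp only [hbdef]; split <;> linarith
    have hsa : ∑ i, a i = (Ma : ℝ) + t := by
      simp [hadef, Finset.sum_add_distrib, Finset.sum_ite_eq']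
    have hsb : ∑ j, b j = (Ma : ℝ) + t := by
      simp [hbdef, Finset.sum_add_distrib, Finset.sum_ite_eq']
      field_simp
    have hs : ∑ i, a i = ∑ j, b j := by rw [hsa, hsb]
    -- plan
    set P : Matrix (Fin Ma) (Fin Mb) ℝ :=
      fun i j => 1/Mb + if i = i0 ∧ j = j0 then t else 0 with hPdef
    have hPmem : P ∈ transportPolytope a b := by
      refine ⟨fun i j => ?_, fun i => ?_, fun j => ?_⟩
      · have : (0:ℝ) < 1/Mb := by positivity
        simp only [hPdef]; split <;> linarith
      · simp only [hPdef, hadef, Finset.sum_add_distrib]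
        rw [Finset.sum_const, Finset.card_univ, Fintype.card_fin]
        congr 1
        · rw [nsmul_eq_mul]; field_simp
        · by_cases hi : i = i0 <;> simp [hi, Finset.sum_ite_eq']
      · simp only [hPdef, hbdef, Finset.sum_add_distrib]
        rw [Finset.sum_const, Finset.card_univ, Fintype.card_fin]
        congr 1
        · rw [nsmul_eq_mul]; field_simp
        · by_cases hj : j = j0 <;> simp [hj, Finset.sum_ite_eq']
    have hcost : transportCost C P = (∑ i, ∑ j, C i j) / Mb + t * C i0 j0 := by
      simp only [transportCost, hPdef, add_mul, Finset.sum_add_distrib]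
      congr 1
      · rw [Finset.sum_div]
        exact Finset.sum_congr rfl fun i _ => by
          rw [Finset.sum_div]
          exact Finset.sum_congr rfl fun j _ => by ring
      · simp_rw [ite_mul, zero_mul]
        have h1 : ∀ i, (∑ j, if i = i0 ∧ j = j0 then t * C i j else 0)
            = if i = i0 then t * C i j0 else 0 := fun i => by
          by_cases hi : i = i0 <;> simp [hi, Finset.sum_ite_eq']
        rw [Finset.sum_congr rfl fun i _ => h1 i]
        simp [Finset.sum_ite_eq']
    have hMKle : MK C a b ≤ (∑ i, ∑ j, C i j) / Mb + t * C i0 j0 :=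
      hcost ▸ aux_MK_le hMa hMb C hPmem
    have hau : ∑ i, a i * u i = ∑ i, u i + t * u i0 := by
      simp only [hadef, add_mul, one_mul, ite_mul, zero_mul]
      rw [Finset.sum_add_distrib]
      simp [Finset.sum_ite_eq']
    have hbv : ∑ j, b j * v j = ((Ma : ℝ)/Mb) * ∑ j, v j + t * v j0 := by
      simp only [hbdef, add_mul, ite_mul, zero_mul]
      rw [Finset.sum_add_distrib]
      simp [Finset.sum_ite_eq', Finset.mul_sum]
    set x : ℝ := ∑ i, a i * u i + ∑ j, b j * v j - MK C a b with hx
    have hxge : r < x := by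
      have : K + t * δ ≤ x := by
        rw [hx, hau, hbv, hK, hδ]
        nlinarith [hMKle]
      linarith
    refine ⟨(x : EReal), ⟨a, b, ha, hb, hs, rfl⟩, ?_⟩
    calc w < (r : EReal) := hwr
      _ < (x : EReal) := by exact_mod_cast hxge
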